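/- Let φ : B_b(S) → ℝ be a locally max-stable monetary risk measure on a metric space S satisfying the tightness condition: for every M > 0 there exists a compact set K ⊆ S with J_{K^c} ≤ −M, where J_A := inf_{r∈ℝ} φ(r·1_{A^c}). Then φ(f) = sup_{x∈S}{ f(x) − I_min(x) } for all f ∈ C_b(S), φ satisfies the LDP with rate function I_min, and I_min has compact sublevel sets. -/

import Mathlib

open MeasureTheory Set Metric Filter Topology

noncomputable section

/-- The bounded Borel measurable functions on `S`. -/
def Bb (S : Type*) [MeasurableSpace S] : Set (S → ℝ) :=
  {f | Measurable f ∧ ∃ C : ℝ, ∀ x, |f x| ≤ C}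

/-- `φ` is a monetary risk measure on the class of functions `X`:
normalization, translation property and monotonicity. -/
def Monetary {S : Type*} (X : Set (S → ℝ)) (φ : (S → ℝ) → ℝ) : Prop :=
  φ 0 = 0 ∧
  (∀ f ∈ X, ∀ c : ℝ, φ (f + fun _ => c) = φ f + c) ∧
  (∀ f ∈ X, ∀ g ∈ X, (∀ x, f x ≤ g x) → φ f ≤ φ g)

/-- `φ` is max-stable on `X`. -/
def MaxStable {S : Type*} (X : Set (S → ℝ)) (φ : (S → ℝ) → ℝ) : Prop :=
  ∀ f ∈ X, ∀ g ∈ X, φ (f ⊔ g) ≤ max (φ f) (φ g)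

/-- The concentration function `J_A = inf_{r ∈ ℝ} φ(r · 1_{Aᶜ})`. -/
def conc {S : Type*} (φ : (S → ℝ) → ℝ) (A : Set S) : EReal :=
  ⨅ r : ℝ, (φ (Aᶜ.indicator fun _ => r) : EReal)

/-- The minimal rate function `I_min(x) = sup_{f ∈ C_b(S)} (f(x) - φ(f))`,
with values in `[0, +∞] ⊆ EReal`. -/
def IminE {S : Type*} [TopologicalSpace S] (φ : (S → ℝ) → ℝ) (x : S) : EReal :=
  ⨆ f : BoundedContinuousFunction S ℝ, ((f x - φ ⇑f : ℝ) : EReal)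

/-- The class `C^K(S)` of functions of the form `f·1_K + r·1_{Kᶜ}` with `f`
continuous on `K` and `r ∈ ℝ`. -/
def CK {S : Type*} [TopologicalSpace S] (K : Set S) : Set (S → ℝ) :=
  {h : S → ℝ | ∃ (f : S → ℝ) (r : ℝ), ContinuousOn f K ∧
    h = K.indicator f + Kᶜ.indicator fun _ => r}

section Aux
set_option linter.unusedSectionVars false

variable {S : Type*} [MetricSpace S] [MeasurableSpace S] [BorelSpace S]
variable {φ : (S → ℝ) → ℝ}

lemma bcf_mem_Bb (f : BoundedContinuousFunction S ℝ) : ⇑f ∈ Bb S :=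
  ⟨f.continuous.measurable, ‖f‖, fun x => by
    simpa [Real.norm_eq_abs] using f.norm_coe_le_norm x⟩

lemma indicator_const_mem_Bb {A : Set S} (hA : MeasurableSet A) (r : ℝ) :
    (A.indicator fun _ => r) ∈ Bb S := by
  refine ⟨Measurable.indicator measurable_const hA, |r|, fun x => ?_⟩
  by_cases hx : x ∈ A <;> simp [Set.indicator_of_mem, Set.indicator_of_notMem, hx, abs_nonneg]

lemma ckfun_mem_Bb {K : Set S} (hK : MeasurableSet K) (f : S → ℝ) (hf : Measurable f)
    (C : ℝ) (hC : ∀ x, |f x| ≤ C) (r : ℝ) :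
    (K.indicator f + Kᶜ.indicator fun _ => r) ∈ Bb S := by
  refine ⟨(hf.indicator hK).add (Measurable.indicator measurable_const hK.compl),
    max C |r|, fun x => ?_⟩
  by_cases hx : x ∈ K
  · simp only [Pi.add_apply, Set.indicator_of_mem hx, Set.indicator_of_notMem (by simpa using hx : x ∉ Kᶜ), add_zero]
    exact le_max_of_le_left (hC x)
  · simp only [Pi.add_apply, Set.indicator_of_notMem hx, Set.indicator_of_mem (by simpa using hx : x ∈ Kᶜ), zero_add]
    exact le_max_of_le_right le_rfl

lemma phi_const (hmon : Monetary (Bb S) φ) (c : ℝ) : φ (fun _ => c) = c := by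
  have h0 : (0 : S → ℝ) ∈ Bb S := ⟨measurable_const, 0, by simp⟩
  have := hmon.2.1 0 h0 c
  simpa [hmon.1] using this

lemma phi_mono (hmon : Monetary (Bb S) φ) {f g : S → ℝ} (hf : f ∈ Bb S) (hg : g ∈ Bb S)
    (h : ∀ x, f x ≤ g x) : φ f ≤ φ g := hmon.2.2 f hf g hg h

lemma phi_le_const (hmon : Monetary (Bb S) φ) {f : S → ℝ} (hf : f ∈ Bb S) {c : ℝ}
    (h : ∀ x, f x ≤ c) : φ f ≤ c := by
  have := phi_mono hmon hf ⟨measurable_const, |c|, fun _ => le_rfl⟩ h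
  rwa [phi_const hmon] at this

lemma const_le_phi (hmon : Monetary (Bb S) φ) {f : S → ℝ} (hf : f ∈ Bb S) {c : ℝ}
    (h : ∀ x, c ≤ f x) : c ≤ φ f := by
  have := phi_mono hmon (⟨measurable_const, |c|, fun _ => le_rfl⟩ : (fun _ : S => c) ∈ Bb S) hf h
  rwa [phi_const hmon] at this


lemma phi_add_const (hmon : Monetary (Bb S) φ) {f : S → ℝ} (hf : f ∈ Bb S) (c : ℝ) :
    φ (f + fun _ => c) = φ f + c := hmon.2.1 f hf c

/-- Urysohn-type construction. -/
lemma urysohn_aux {C : Set S} (hC : IsClosed C) {x : S} (hx : x ∉ C) {r : ℝ} (hr : r ≤ 0) :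
    ∃ f : BoundedContinuousFunction S ℝ, f x = 0 ∧ ∀ y, f y ≤ C.indicator (fun _ => r) y := by
  rcases eq_empty_or_nonempty C with rfl | hne
  · exact ⟨0, rfl, fun y => by simp⟩
  · set δ := infDist x C with hδ
    have hδpos : 0 < δ := (hC.notMem_iff_infDist_pos hne).1 hx
    set c : ℝ := (-r) / δ with hc
    have hc0 : 0 ≤ c := div_nonneg (neg_nonneg.2 hr) hδpos.le
    have hcont : Continuous fun y => max r (-c * dist y x) :=
      continuous_const.max (continuous_const.mul (continuous_id.dist continuous_const))
    have hbd : ∀ y, ‖max r (-c * dist y x)‖ ≤ |r| := by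
      intro y
      rw [Real.norm_eq_abs, abs_le]
      constructor
      · exact neg_abs_le r |>.trans (le_max_left _ _)
      · refine max_le (le_abs_self r) ?_
        have : -c * dist y x ≤ 0 :=
          mul_nonpos_of_nonpos_of_nonneg (neg_nonpos.2 hc0) dist_nonneg
        exact this.trans (abs_nonneg r)
    refine ⟨BoundedContinuousFunction.ofNormedAddCommGroup _ hcont |r| hbd, ?_, ?_⟩
    · simp [hr]
    · intro y
      simp only [BoundedContinuousFunction.coe_ofNormedAddCommGroup]
      by_cases hy : y ∈ C
      · rw [Set.indicator_of_mem hy]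
        refine max_le le_rfl ?_
        have hdy : δ ≤ dist y x := by
          rw [dist_comm]; exact infDist_le_dist_of_mem hy
        have : -c * dist y x ≤ -c * δ :=
          mul_le_mul_of_nonpos_left hdy (neg_nonpos.2 hc0)
        refine this.trans ?_
        have hceq : -c * δ = r := by
          rw [hc]; field_simp
        exact le_of_eq hceq
      · rw [Set.indicator_of_notMem hy]
        refine max_le hr ?_
        exact mul_nonpos_of_nonpos_of_nonneg (neg_nonpos.2 hc0) dist_nonneg

lemma ereal_sub_le_of (a c : ℝ) (b : EReal) (h : ((a - c : ℝ) : EReal) ≤ b) :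
    (a : EReal) - b ≤ (c : EReal) := by
  induction b using EReal.rec with
  | bot => simp only [le_bot_iff] at h; exact absurd h (EReal.coe_ne_bot _)
  | coe b => norm_cast at h ⊢; linarith
  | top => simp [EReal.sub_top]

lemma ereal_lt_of_sub_lt (a t : ℝ) (b : EReal) (h : (a : EReal) - b < (t : EReal)) :
    ((a - t : ℝ) : EReal) < b := by
  induction b using EReal.rec with
  | bot => rw [EReal.coe_sub_bot] at h; exact absurd h (by simp)
  | coe b => norm_cast at h ⊢; linarith
  | top => exact EReal.coe_lt_top _


lemma Bb_sup_mem {u v : S → ℝ} (hu : u ∈ Bb S) (hv : v ∈ Bb S) : u ⊔ v ∈ Bb S := by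
  obtain ⟨hum, Cu, hCu⟩ := hu
  obtain ⟨hvm, Cv, hCv⟩ := hv
  refine ⟨?_, max Cu Cv, fun x => ?_⟩
  · exact hum.max hvm
  · have : (u ⊔ v) x = max (u x) (v x) := rfl
    rw [this, abs_le]
    constructor
    · exact le_max_of_le_left ((neg_le_neg (le_max_left Cu Cv)).trans (neg_le_of_abs_le (hCu x)))
    · exact max_le ((le_abs_self _).trans ((hCu x).trans (le_max_left _ _)))
        ((le_abs_self _).trans ((hCv x).trans (le_max_right _ _)))

lemma CK_sup_mem {K : Set S} {u v : S → ℝ} (hu : u ∈ CK K) (hv : v ∈ CK K) :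
    u ⊔ v ∈ CK K := by
  obtain ⟨f, r, hf, rfl⟩ := hu
  obtain ⟨g, s, hg, rfl⟩ := hv
  refine ⟨f ⊔ g, r ⊔ s, hf.sup hg, funext fun y => ?_⟩
  by_cases hy : y ∈ K <;>
    simp [Pi.sup_apply, Set.indicator_of_mem, Set.indicator_of_notMem, hy]

lemma maxStable_sup' {K : Set S} (hms : MaxStable (CK K) φ) {ι : Type*}
    (T : Finset ι) (hT : T.Nonempty) (u : ι → S → ℝ)
    (hu : ∀ i ∈ T, u i ∈ CK K ∧ u i ∈ Bb S) :
    T.sup' hT u ∈ CK K ∧ T.sup' hT u ∈ Bb S ∧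
      φ (T.sup' hT u) ≤ T.sup' hT fun i => φ (u i) := by
  classical
  revert hu
  induction hT using Finset.Nonempty.cons_induction with
  | singleton i =>
      intro hu
      obtain ⟨h1, h2⟩ := hu i (Finset.mem_singleton_self i)
      simpa using ⟨h1, h2⟩
  | cons i T hiT hTne ih =>
      intro hu
      have hu' : ∀ j ∈ T, u j ∈ CK K ∧ u j ∈ Bb S := fun j hj =>
        hu j (Finset.mem_cons_of_mem hj)
      obtain ⟨hmem, hbb, hle⟩ := ih hu'
      have hui := hu i (Finset.mem_cons_self i T)
      rw [Finset.sup'_cons (H := hTne), Finset.sup'_cons (H := hTne)]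
      refine ⟨CK_sup_mem hui.1 hmem, Bb_sup_mem hui.2 hbb, ?_⟩
      refine le_trans (hms _ hui.1 _ hmem) ?_
      exact max_le_max le_rfl hle


lemma keyA (hmon : Monetary (Bb S) φ) (hloc : ∀ K : Set S, IsCompact K → MaxStable (CK K) φ)
    {K : Set S} (hK : IsCompact K) (f : BoundedContinuousFunction S ℝ) (r t s : ℝ)
    (ht : ∀ x ∈ K, ((f x - t : ℝ) : EReal) < IminE φ x)
    (hs : ∃ r' : ℝ, φ (K.indicator fun _ => r') ≤ s) :
    φ (K.indicator ⇑f + Kᶜ.indicator fun _ => r) ≤ max t (r + s) := by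
  classical
  obtain ⟨r', hr'⟩ := hs
  have hKm : MeasurableSet K := hK.isClosed.measurableSet
  rcases eq_empty_or_nonempty K with rfl | hKne
  · have hs0 : 0 ≤ s := by
      have : ((∅ : Set S).indicator fun _ => r') = (0 : S → ℝ) := by
        funext y; simp
      rw [this, hmon.1] at hr'
      exact hr'
    have heq : ((∅ : Set S).indicator ⇑f + (∅ᶜ : Set S).indicator fun _ => r) =
        (fun _ : S => r) := by
      funext y; simp
    rw [heq, phi_const hmon]
    exact le_max_of_le_right (by linarith)
  -- nonempty case
  have hcov : ∀ x : K, ∃ g : BoundedContinuousFunction S ℝ, (f x - t : ℝ) < g x - φ ⇑g := by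
    rintro ⟨x, hx⟩
    have h1 := ht x hx
    unfold IminE at h1
    rw [lt_iSup_iff] at h1
    obtain ⟨g, hg⟩ := h1
    exact ⟨g, by exact_mod_cast hg⟩
  choose g hg using hcov
  set U : K → Set S := fun i => {y | f y - g i y < t - φ ⇑(g i)} with hU
  have hUopen : ∀ i, IsOpen (U i) := fun i =>
    isOpen_lt (f.continuous.sub (g i).continuous) continuous_const
  have hKsub : K ⊆ ⋃ i, U i := by
    intro x hx
    refine mem_iUnion.2 ⟨⟨x, hx⟩, ?_⟩
    have := hg ⟨x, hx⟩
    simp only [hU, mem_setOf_eq]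
    linarith
  obtain ⟨T, hT⟩ := hK.elim_finite_subcover U hUopen hKsub
  have hTne : T.Nonempty := by
    rcases hKne with ⟨x0, hx0⟩
    rcases mem_iUnion₂.1 (hT hx0) with ⟨i, hiT, _⟩
    exact ⟨i, hiT⟩
  set h : K → S → ℝ := fun i => ⇑(g i) + fun _ => (t - φ ⇑(g i)) with hh
  have hphih : ∀ i, φ (h i) = t := by
    intro i
    rw [hh]
    rw [phi_add_const hmon (bcf_mem_Bb (g i))]
    ring
  have hhbd : ∀ i, ∀ y, |h i y| ≤ ‖g i‖ + |t - φ ⇑(g i)| := by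
    intro i y
    calc |h i y| ≤ |g i y| + |t - φ ⇑(g i)| := abs_add_le _ _
    _ ≤ ‖g i‖ + |t - φ ⇑(g i)| := by
        have := (g i).norm_coe_le_norm y
        rw [Real.norm_eq_abs] at this
        linarith
  have hhm : ∀ i, Measurable (h i) := fun i =>
    ((g i).continuous.measurable).add measurable_const
  set u : K → S → ℝ := fun i => K.indicator (h i) + Kᶜ.indicator fun _ => r with hu
  have huCK : ∀ i, u i ∈ CK K := fun i =>
    ⟨h i, r, (((g i).continuous).add continuous_const).continuousOn, rfl⟩
  have huBb : ∀ i, u i ∈ Bb S := fun i =>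
    ckfun_mem_Bb hKm (h i) (hhm i) _ (hhbd i) r
  -- bound φ (u i)
  have hφu : ∀ i, φ (u i) ≤ max t (r + s) := by
    intro i
    set Ci : ℝ := ‖g i‖ + |t - φ ⇑(g i)| with hCi
    set a : ℝ := min r (-Ci) with ha
    set b : ℝ := min (r + r') (-Ci) with hb
    have hbh : ∀ y, b ≤ h i y := fun y => by
      have h1 := hhbd i y
      have : -Ci ≤ h i y := by
        rw [abs_le] at h1; linarith [h1.1]
      exact le_trans (min_le_right _ _) this
    have hah : ∀ y, a ≤ h i y := fun y => by
      have h1 := hhbd i y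
      have : -Ci ≤ h i y := by
        rw [abs_le] at h1; linarith [h1.1]
      exact le_trans (min_le_right _ _) this
    set v : S → ℝ := K.indicator (h i) + Kᶜ.indicator fun _ => a with hv
    set w : S → ℝ := K.indicator (fun _ => b) + Kᶜ.indicator fun _ => r with hw
    have hsup : u i = v ⊔ w := by
      funext y
      have : (v ⊔ w) y = max (v y) (w y) := rfl
      rw [this, hu, hv, hw]
      by_cases hy : y ∈ K
      · simp only [Pi.add_apply, Set.indicator_of_mem hy,
          Set.indicator_of_notMem (show y ∉ Kᶜ by simpa using hy), add_zero, zero_add]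
        exact (max_eq_left (hbh y)).symm
      · simp only [Pi.add_apply, Set.indicator_of_notMem hy,
          Set.indicator_of_mem (show y ∈ Kᶜ by simpa using hy), add_zero, zero_add]
        exact (max_eq_right (min_le_left r (-Ci))).symm
    have hvCK : v ∈ CK K := ⟨h i, a, (((g i).continuous).add continuous_const).continuousOn, rfl⟩
    have hwCK : w ∈ CK K := ⟨fun _ => b, r, continuousOn_const, rfl⟩
    have hstep : φ (u i) ≤ max (φ v) (φ w) := by
      rw [hsup]; exact hloc K hK v hvCK w hwCK
    have hvBb : v ∈ Bb S := ckfun_mem_Bb hKm (h i) (hhm i) _ (hhbd i) a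
    have hφv : φ v ≤ t := by
      have hle : ∀ y, v y ≤ h i y := by
        intro y
        rw [hv]
        by_cases hy : y ∈ K
        · simp [Set.indicator_of_mem hy, Set.indicator_of_notMem
            (show y ∉ Kᶜ by simpa using hy)]
        · simp only [Pi.add_apply, Set.indicator_of_notMem hy,
            Set.indicator_of_mem (show y ∈ Kᶜ by simpa using hy), zero_add]
          exact hah y
      have := phi_mono hmon hvBb ⟨hhm i, _, hhbd i⟩ hle
      rw [hphih i] at this
      exact this
    have hφw : φ w ≤ r + s := by
      have hweq : w = (K.indicator fun _ => (b - r)) + fun _ => r := by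
        funext y
        rw [hw]
        by_cases hy : y ∈ K
        · simp [Set.indicator_of_mem hy, Set.indicator_of_notMem
            (show y ∉ Kᶜ by simpa using hy)]
        · simp [Set.indicator_of_notMem hy, Set.indicator_of_mem
            (show y ∈ Kᶜ by simpa using hy)]
      rw [hweq, phi_add_const hmon (indicator_const_mem_Bb hKm (b - r))]
      have hmono : φ (K.indicator fun _ => (b - r)) ≤ φ (K.indicator fun _ => r') := by
        refine phi_mono hmon (indicator_const_mem_Bb hKm (b - r))
          (indicator_const_mem_Bb hKm r') fun y => ?_
        by_cases hy : y ∈ K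
        · simp only [Set.indicator_of_mem hy]
          have : b ≤ r + r' := min_le_left _ _
          linarith
        · simp [Set.indicator_of_notMem hy]
      linarith [hmono, hr']
    calc φ (u i) ≤ max (φ v) (φ w) := hstep
    _ ≤ max t (r + s) := max_le_max hφv hφw
  -- assemble
  obtain ⟨hsCK, hsBb, hsle⟩ := maxStable_sup' (hloc K hK) T hTne u fun i _ => ⟨huCK i, huBb i⟩
  have hptwise : ∀ y, (K.indicator ⇑f + Kᶜ.indicator fun _ => r) y ≤ (T.sup' hTne u) y := by
    intro y
    rw [Finset.sup'_apply]
    by_cases hy : y ∈ K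
    · rcases mem_iUnion₂.1 (hT hy) with ⟨i, hiT, hyU⟩
      have h1 : f y ≤ u i y := by
        rw [hu]
        simp only [Pi.add_apply, Set.indicator_of_mem hy,
          Set.indicator_of_notMem (show y ∉ Kᶜ by simpa using hy), add_zero]
        have : f y - g i y < t - φ ⇑(g i) := hyU
        rw [hh]
        simp only [Pi.add_apply]
        linarith
      have h2 : (K.indicator ⇑f + Kᶜ.indicator fun _ => r) y = f y := by
        simp [Set.indicator_of_mem hy, Set.indicator_of_notMem
          (show y ∉ Kᶜ by simpa using hy)]
      rw [h2]
      exact h1.trans (Finset.le_sup' (fun i => u i y) hiT)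
    · obtain ⟨i, hiT⟩ := hTne
      have h1 : u i y = r := by
        rw [hu]
        simp [Set.indicator_of_notMem hy, Set.indicator_of_mem
          (show y ∈ Kᶜ by simpa using hy)]
      have h2 : (K.indicator ⇑f + Kᶜ.indicator fun _ => r) y = r := by
        simp [Set.indicator_of_notMem hy, Set.indicator_of_mem
          (show y ∈ Kᶜ by simpa using hy)]
      rw [h2, ← h1]
      exact Finset.le_sup' (fun i => u i y) hiT
  have hfBb : (K.indicator ⇑f + Kᶜ.indicator fun _ => r) ∈ Bb S :=
    ckfun_mem_Bb hKm ⇑f f.continuous.measurable ‖f‖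
      (fun x => by simpa [Real.norm_eq_abs] using f.norm_coe_le_norm x) r
  calc φ (K.indicator ⇑f + Kᶜ.indicator fun _ => r)
      ≤ φ (T.sup' hTne u) := phi_mono hmon hfBb hsBb hptwise
    _ ≤ T.sup' hTne fun i => φ (u i) := hsle
    _ ≤ max t (r + s) := Finset.sup'_le _ _ fun i _ => hφu i


lemma rep_lemma (hmon : Monetary (Bb S) φ)
    (hloc : ∀ K : Set S, IsCompact K → MaxStable (CK K) φ)
    (htight : ∀ M : ℝ, 0 < M →
      ∃ K : Set S, IsCompact K ∧ conc φ Kᶜ ≤ ((-M : ℝ) : EReal))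
    (f : BoundedContinuousFunction S ℝ) :
    (φ ⇑f : EReal) = ⨆ x : S, (((f x : ℝ) : EReal) - IminE φ x) := by
  have hfabs : ∀ x, |f x| ≤ ‖f‖ := fun x => by
    simpa [Real.norm_eq_abs] using f.norm_coe_le_norm x
  apply le_antisymm
  · by_contra hcon
    push_neg at hcon
    obtain ⟨t, ht1, ht2⟩ := EReal.exists_between_coe_real hcon
    set M : ℝ := max 1 (‖f‖ + 1 - t) with hM
    obtain ⟨K, hK, hKc⟩ := htight M (lt_of_lt_of_le one_pos (le_max_left _ _))
    have hM1 : (1:ℝ) ≤ M := le_max_left _ _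
    have h1 : conc φ Kᶜ < ((-M + 1 : ℝ) : EReal) :=
      lt_of_le_of_lt hKc (by exact_mod_cast (by linarith : (-M : ℝ) < -M + 1))
    rw [conc] at h1
    simp only [compl_compl] at h1
    rw [iInf_lt_iff] at h1
    obtain ⟨r', hr'⟩ := h1
    have hr'2 : φ (K.indicator fun _ => r') ≤ -M + 1 := le_of_lt (by exact_mod_cast hr')
    have htK : ∀ x ∈ K, ((f x - t : ℝ) : EReal) < IminE φ x := by
      intro x hx
      have h2 : ((f x : ℝ) : EReal) - IminE φ x < (t : EReal) :=
        lt_of_le_of_lt (le_iSup (fun x : S => ((f x : ℝ) : EReal) - IminE φ x) x) ht1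
      exact ereal_lt_of_sub_lt _ _ _ h2
    have hkey := keyA hmon hloc hK f ‖f‖ t (-M+1) htK ⟨r', hr'2⟩
    have hmono : φ ⇑f ≤ φ (K.indicator ⇑f + Kᶜ.indicator fun _ => ‖f‖) := by
      refine phi_mono hmon (bcf_mem_Bb f)
        (ckfun_mem_Bb hK.isClosed.measurableSet ⇑f f.continuous.measurable ‖f‖ hfabs ‖f‖)
        fun y => ?_
      by_cases hy : y ∈ K
      · simp [Set.indicator_of_mem hy,
          Set.indicator_of_notMem (show y ∉ Kᶜ by simpa using hy)]
      · simp only [Pi.add_apply, Set.indicator_of_notMem hy,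
          Set.indicator_of_mem (show y ∈ Kᶜ by simpa using hy), zero_add]
        exact (le_abs_self _).trans (hfabs y)
    have hft : φ ⇑f ≤ t := by
      have h3 : φ ⇑f ≤ max t (‖f‖ + (-M + 1)) := hmono.trans hkey
      have hM2 : ‖f‖ + (-M + 1) ≤ t := by
        have : ‖f‖ + 1 - t ≤ M := le_max_right _ _
        linarith
      exact h3.trans (max_le le_rfl hM2)
    exact absurd ht2 (not_lt.2 (by exact_mod_cast hft))
  · refine iSup_le fun x => ?_
    have hIm : ((f x - φ ⇑f : ℝ) : EReal) ≤ IminE φ x :=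
      le_iSup (fun g : BoundedContinuousFunction S ℝ => ((g x - φ ⇑g : ℝ) : EReal)) f
    exact ereal_sub_le_of (f x) (φ ⇑f) _ hIm


lemma Imin_nonneg (hmon : Monetary (Bb S) φ) (x : S) : (0 : EReal) ≤ IminE φ x := by
  have h := le_iSup (fun g : BoundedContinuousFunction S ℝ => ((g x - φ ⇑g : ℝ) : EReal))
    (0 : BoundedContinuousFunction S ℝ)
  have h0 : φ ⇑(0 : BoundedContinuousFunction S ℝ) = 0 := by
    rw [BoundedContinuousFunction.coe_zero, hmon.1]
  simp only [BoundedContinuousFunction.coe_zero, Pi.zero_apply, hmon.1, sub_zero] at h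
  rw [IminE]
  refine le_trans (le_of_eq ?_) h
  norm_num

lemma sublevel_closed (c : EReal) : IsClosed {x : S | IminE φ x ≤ c} := by
  have heq : {x : S | IminE φ x ≤ c} =
      ⋂ g : BoundedContinuousFunction S ℝ, {x : S | ((g x - φ ⇑g : ℝ) : EReal) ≤ c} := by
    ext x
    simp [IminE, iSup_le_iff, mem_iInter]
  rw [heq]
  refine isClosed_iInter fun g => ?_
  have : Continuous fun x : S => ((g x - φ ⇑g : ℝ) : EReal) :=
    continuous_coe_real_ereal.comp (g.continuous.sub continuous_const)
  exact isClosed_le this continuous_const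

lemma Imin_offC (hmon : Monetary (Bb S) φ) {C : Set S} (hCc : IsClosed C)
    (hCm : MeasurableSet C) {x : S} (hx : x ∉ C) {r : ℝ} (hr : r ≤ 0) :
    ((-(φ (C.indicator fun _ => r)) : ℝ) : EReal) ≤ IminE φ x := by
  obtain ⟨f, hfx, hfle⟩ := urysohn_aux hCc hx hr
  have hφ : φ ⇑f ≤ φ (C.indicator fun _ => r) :=
    phi_mono hmon (bcf_mem_Bb f) (indicator_const_mem_Bb hCm r) hfle
  have h1 : ((f x - φ ⇑f : ℝ) : EReal) ≤ IminE φ x :=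
    le_iSup (fun g : BoundedContinuousFunction S ℝ => ((g x - φ ⇑g : ℝ) : EReal)) f
  refine le_trans ?_ h1
  rw [EReal.coe_le_coe_iff, hfx]
  linarith


lemma ldp_lower (hmon : Monetary (Bb S) φ) {A : Set S} (hA : MeasurableSet A) :
    -(⨅ x ∈ interior A, IminE φ x) ≤ conc φ A := by
  rw [EReal.neg_le]
  refine le_iInf₂ fun x hx => ?_
  rw [← EReal.neg_le]
  rw [conc]
  refine le_iInf fun r => ?_
  rw [EReal.neg_le, ← EReal.coe_neg]
  by_cases hr : r ≤ 0
  · have hxcl : x ∉ closure (Aᶜ) := by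
      rw [closure_compl]
      simpa using hx
    have key := Imin_offC hmon isClosed_closure isClosed_closure.measurableSet hxcl hr
    refine le_trans ?_ key
    rw [EReal.coe_le_coe_iff, neg_le_neg_iff]
    refine phi_mono hmon (indicator_const_mem_Bb isClosed_closure.measurableSet r)
      (indicator_const_mem_Bb hA.compl r) fun y => ?_
    by_cases hy : y ∈ Aᶜ
    · rw [Set.indicator_of_mem hy, Set.indicator_of_mem (subset_closure hy)]
    · rw [Set.indicator_of_notMem hy]
      by_cases hy2 : y ∈ closure (Aᶜ)
      · rw [Set.indicator_of_mem hy2]; exact hr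
      · rw [Set.indicator_of_notMem hy2]
  · push_neg at hr
    have h0 : (0:ℝ) ≤ φ (Aᶜ.indicator fun _ => r) := by
      refine const_le_phi hmon (indicator_const_mem_Bb hA.compl r) fun y => ?_
      by_cases hy : y ∈ Aᶜ
      · rw [Set.indicator_of_mem hy]; exact hr.le
      · rw [Set.indicator_of_notMem hy]
    refine le_trans ?_ (Imin_nonneg hmon x)
    exact_mod_cast (by linarith : (-(φ (Aᶜ.indicator fun _ => r)) : ℝ) ≤ 0)

lemma ldp_upper (hmon : Monetary (Bb S) φ)
    (hloc : ∀ K : Set S, IsCompact K → MaxStable (CK K) φ)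
    (htight : ∀ M : ℝ, 0 < M →
      ∃ K : Set S, IsCompact K ∧ conc φ Kᶜ ≤ ((-M : ℝ) : EReal))
    {A : Set S} (hA : MeasurableSet A) :
    conc φ A ≤ -(⨅ x ∈ closure A, IminE φ x) := by
  rcases eq_empty_or_nonempty A with rfl | hAne
  · have hbot : conc φ (∅ : Set S) = ⊥ := by
      rw [conc, iInf_eq_bot]
      intro b hb
      have hconst : ∀ c : ℝ, φ ((∅ : Set S)ᶜ.indicator fun _ => c) = c := by
        intro c
        have h1 : ((∅ : Set S)ᶜ.indicator fun _ => c) = fun _ : S => c := by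
          funext y; simp
        rw [h1, phi_const hmon]
      induction b using EReal.rec with
      | bot => exact absurd hb (lt_irrefl _)
      | coe c =>
          exact ⟨c - 1, by rw [hconst]; exact_mod_cast (by linarith : (c - 1 : ℝ) < c)⟩
      | top => exact ⟨0, by rw [hconst]; exact EReal.coe_lt_top 0⟩
    rw [hbot]; exact bot_le
  · set F := closure A with hF
    have hFc : IsClosed F := isClosed_closure
    have hFne : F.Nonempty := hAne.closure
    by_contra hcon
    push_neg at hcon
    obtain ⟨t, ht1, ht2⟩ := EReal.exists_between_coe_real hcon
    have hFI : ∀ x ∈ F, ((-t : ℝ) : EReal) < IminE φ x := by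
      intro x hx
      have h1 : -((t : ℝ) : EReal) < ⨅ x ∈ F, IminE φ x := EReal.neg_lt_of_neg_lt ht1
      calc ((-t : ℝ) : EReal) = -((t : ℝ) : EReal) := by rw [EReal.coe_neg]
      _ < ⨅ x ∈ F, IminE φ x := h1
      _ ≤ IminE φ x := iInf₂_le x hx
    set r : ℝ := min t 0 - 1 with hrdef
    have hrneg : r ≤ 0 := by
      have := min_le_right t 0; rw [hrdef]; linarith
    have hrt : r ≤ t - 1 := by
      have := min_le_left t 0; rw [hrdef]; linarith
    set M : ℝ := max 1 (1 - t) with hM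
    obtain ⟨K, hK, hKc⟩ := htight M (lt_of_lt_of_le one_pos (le_max_left _ _))
    have hM1 : (1:ℝ) ≤ M := le_max_left _ _
    have h1 : conc φ Kᶜ < ((-M + 1 : ℝ) : EReal) :=
      lt_of_le_of_lt hKc (by exact_mod_cast (by linarith : (-M : ℝ) < -M + 1))
    rw [conc] at h1
    simp only [compl_compl] at h1
    rw [iInf_lt_iff] at h1
    obtain ⟨r', hr'⟩ := h1
    have hr'2 : φ (K.indicator fun _ => r') ≤ -M + 1 := le_of_lt (by exact_mod_cast hr')
    have hst : -M + 1 ≤ t := by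
      have := le_max_right 1 (1 - t); rw [hM]; linarith [le_max_right 1 (1-t)]
    set K' := K ∩ {x : S | IminE φ x ≤ ((-t : ℝ) : EReal)} with hK'
    have hK'c : IsCompact K' := hK.inter_right (sublevel_closed _)
    have hK'F : ∀ x ∈ K', x ∉ F := fun x hx hxF => absurd (hFI x hxF) (not_lt.2 hx.2)
    obtain ⟨c, hc0, hcK'⟩ : ∃ c : ℝ, 0 ≤ c ∧ ∀ x ∈ K', -c * infDist x F ≤ r := by
      rcases eq_empty_or_nonempty K' with h | hne
      · refine ⟨1, zero_le_one, fun x hx => ?_⟩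
        rw [h] at hx; exact absurd hx (notMem_empty x)
      · obtain ⟨x₀, hx₀K', hmin⟩ := hK'c.exists_isMinOn hne
          ((continuous_infDist_pt F).continuousOn)
        set δ := infDist x₀ F with hδ
        have hδpos : 0 < δ := (hFc.notMem_iff_infDist_pos hFne).1 (hK'F _ hx₀K')
        refine ⟨(-r)/δ, div_nonneg (by linarith) hδpos.le, fun x hx => ?_⟩
        have hδle : δ ≤ infDist x F := hmin hx
        have h2 : -((-r)/δ) * infDist x F ≤ -((-r)/δ) * δ :=
          mul_le_mul_of_nonpos_left hδle
            (neg_nonpos.2 (div_nonneg (by linarith) hδpos.le))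
        refine h2.trans (le_of_eq ?_)
        field_simp
    set g : S → ℝ := fun y => max r (-c * infDist y F) with hg
    have hgcont : Continuous g :=
      continuous_const.max (continuous_const.mul (continuous_infDist_pt F))
    have hgle0 : ∀ y, g y ≤ 0 := fun y =>
      max_le hrneg (mul_nonpos_of_nonpos_of_nonneg (neg_nonpos.2 hc0) infDist_nonneg)
    have hgger : ∀ y, r ≤ g y := fun y => le_max_left _ _
    have hgbd : ∀ y, ‖g y‖ ≤ |r| := by
      intro y
      rw [Real.norm_eq_abs, abs_le]
      exact ⟨(neg_abs_le r).trans (hgger y), (hgle0 y).trans (abs_nonneg r)⟩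
    set G := BoundedContinuousFunction.ofNormedAddCommGroup g hgcont |r| hgbd with hG
    have hGcoe : ⇑G = g := rfl
    have hgA : ∀ x ∈ A, g x = 0 := by
      intro x hx
      rw [hg]
      simp only
      rw [infDist_zero_of_mem (subset_closure hx), mul_zero]
      exact max_eq_right hrneg
    have htK : ∀ x ∈ K, ((G x - t : ℝ) : EReal) < IminE φ x := by
      intro x hx
      by_cases hxI : IminE φ x ≤ ((-t : ℝ) : EReal)
      · have hxK' : x ∈ K' := ⟨hx, hxI⟩
        have hgx : g x = r := le_antisymm (max_le le_rfl (hcK' x hxK')) (hgger x)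
        have hGx : G x = r := by rw [hGcoe]; exact hgx
        rw [hGx]
        calc ((r - t : ℝ) : EReal) < ((0:ℝ) : EReal) := by
              exact_mod_cast (by linarith : (r - t : ℝ) < 0)
        _ ≤ IminE φ x := by exact_mod_cast Imin_nonneg hmon x
      · push_neg at hxI
        refine lt_of_le_of_lt ?_ hxI
        rw [EReal.coe_le_coe_iff]
        have := hgle0 x
        have hGx : G x = g x := rfl
        rw [hGx]
        linarith
    have hkey := keyA hmon hloc hK G 0 t (-M+1) htK ⟨r', hr'2⟩
    have hchain1 : φ (Aᶜ.indicator fun _ => r) ≤ φ ⇑G := by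
      refine phi_mono hmon (indicator_const_mem_Bb hA.compl r) (bcf_mem_Bb G) fun y => ?_
      rw [hGcoe]
      by_cases hy : y ∈ A
      · rw [Set.indicator_of_notMem (show y ∉ Aᶜ by simpa using hy), hgA y hy]
      · rw [Set.indicator_of_mem (show y ∈ Aᶜ by simpa using hy)]
        exact hgger y
    have hchain2 : φ ⇑G ≤ φ (K.indicator ⇑G + Kᶜ.indicator fun _ => (0:ℝ)) := by
      refine phi_mono hmon (bcf_mem_Bb G)
        (ckfun_mem_Bb hK.isClosed.measurableSet ⇑G G.continuous.measurable |r|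
          (fun x => by simpa [Real.norm_eq_abs, hGcoe] using hgbd x) 0) fun y => ?_
      by_cases hy : y ∈ K
      · simp [Set.indicator_of_mem hy,
          Set.indicator_of_notMem (show y ∉ Kᶜ by simpa using hy)]
      · simp only [Pi.add_apply, Set.indicator_of_notMem hy,
          Set.indicator_of_mem (show y ∈ Kᶜ by simpa using hy), zero_add]
        exact hgle0 y
    have hfinal : φ (Aᶜ.indicator fun _ => r) ≤ t := by
      refine (hchain1.trans (hchain2.trans hkey)).trans ?_
      rw [zero_add]
      exact max_le le_rfl (by linarith)
    refine absurd ht2 (not_lt.2 ?_)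
    calc conc φ A ≤ ((φ (Aᶜ.indicator fun _ => r) : ℝ) : EReal) := iInf_le _ r
    _ ≤ ((t : ℝ) : EReal) := by exact_mod_cast hfinal

lemma sublevel_compact (hmon : Monetary (Bb S) φ)
    (htight : ∀ M : ℝ, 0 < M →
      ∃ K : Set S, IsCompact K ∧ conc φ Kᶜ ≤ ((-M : ℝ) : EReal))
    (r : ℝ) : IsCompact {x : S | IminE φ x ≤ (r : EReal)} := by
  set M : ℝ := max 0 r + 1 with hM
  obtain ⟨K, hK, hKc⟩ := htight M (by positivity)
  have h1 : conc φ Kᶜ < ((-(max 0 r) : ℝ) : EReal) :=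
    lt_of_le_of_lt hKc (by exact_mod_cast (by rw [hM]; linarith : (-M : ℝ) < -(max 0 r)))
  rw [conc] at h1
  simp only [compl_compl] at h1
  rw [iInf_lt_iff] at h1
  obtain ⟨r', hr'⟩ := h1
  have hr'2 : φ (K.indicator fun _ => r') < -(max 0 r) := by exact_mod_cast hr'
  have hr'neg : r' ≤ 0 := by
    by_contra h
    push_neg at h
    have h0 : (0:ℝ) ≤ φ (K.indicator fun _ => r') := by
      refine const_le_phi hmon (indicator_const_mem_Bb hK.isClosed.measurableSet r') fun y => ?_
      by_cases hy : y ∈ K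
      · rw [Set.indicator_of_mem hy]; exact h.le
      · rw [Set.indicator_of_notMem hy]
    have : (0:ℝ) ≤ max 0 r := le_max_left _ _
    linarith
  have hsub : {x : S | IminE φ x ≤ (r : EReal)} ⊆ K := by
    intro x hx
    by_contra hxK
    have key := Imin_offC hmon hK.isClosed hK.isClosed.measurableSet hxK hr'neg
    have h2 : ((-(φ (K.indicator fun _ => r')) : ℝ) : EReal) ≤ (r : EReal) :=
      le_trans key hx
    rw [EReal.coe_le_coe_iff] at h2
    have : (r:ℝ) ≤ max 0 r := le_max_right _ _
    linarith
  exact hK.of_isClosed_subset (sublevel_closed _) hsub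

end Aux

theorem stmt19 {S : Type*} [MetricSpace S] [MeasurableSpace S] [BorelSpace S]
    (φ : (S → ℝ) → ℝ) (hmon : Monetary (Bb S) φ)
    (hloc : ∀ K : Set S, IsCompact K → MaxStable (CK K) φ)
    (htight : ∀ M : ℝ, 0 < M →
      ∃ K : Set S, IsCompact K ∧ conc φ Kᶜ ≤ ((-M : ℝ) : EReal)) :
    (∀ f : BoundedContinuousFunction S ℝ,
      (φ ⇑f : EReal) = ⨆ x : S, (((f x : ℝ) : EReal) - IminE φ x)) ∧
    (∀ A : Set S, MeasurableSet A →
      -(⨅ x ∈ interior A, IminE φ x) ≤ conc φ A ∧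
        conc φ A ≤ -(⨅ x ∈ closure A, IminE φ x)) ∧
    (∀ r : ℝ, IsCompact {x : S | IminE φ x ≤ (r : EReal)}) := by
  exact ⟨fun f => rep_lemma hmon hloc htight f,
    fun _ hA => ⟨ldp_lower hmon hA, ldp_upper hmon hloc htight hA⟩,
    fun r => sublevel_compact hmon htight r⟩
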